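/- arXiv:2411.11687 — 5 statements merged into one kernel-verified Lean document; each statement's English description precedes it below -/
import Mathlib

section
/- Let x_1,…,x_n ∈ ℝ^m be nonzero vectors with pairwise non-negative inner products (⟨x_r, x_s⟩ ≥ 0 for all r,s), and let w_1,…,w_n ≥ 0 and v_1,…,v_n ≥ 0 be non-negative weights such that a = Σ_{r=1}^n w_r x_r ≠ 0 and b = Σ_{s=1}^n v_s x_s ≠ 0. Then sim(a,b) ≥ min_{r,s ∈ {1,…,n}} sim(x_r, x_s), where sim(u,v) = ⟨u,v⟩/(‖u‖‖v‖) is the cosine similarity. In particular, the cosine similarity of any two non-negative convex combinations of the x_r is at least the minimum pairwise cosine similarity of the x_r. -/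
open scoped RealInnerProductSpace

/-- Cosine similarity of two vectors in `ℝ^m`. -/
noncomputable def cosSim {m : ℕ} (u v : EuclideanSpace ℝ (Fin m)) : ℝ :=
  ⟪u, v⟫ / (‖u‖ * ‖v‖)

/-- **Cosine similarity of non-negative combinations is at least the minimum pairwise
cosine similarity.** If `x 1, …, x n ∈ ℝ^m` are nonzero vectors with pairwise non-negative
inner products, and `a = ∑ r, w r • x r ≠ 0`, `b = ∑ s, v s • x s ≠ 0` with non-negative
weights, then `sim(a,b) ≥ min_{r,s} sim(x r, x s)`. -/
theorem cosine_similarity_ge_min_pairwise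
    {n m : ℕ} [NeZero n]
    (x : Fin n → EuclideanSpace ℝ (Fin m))
    (hx0 : ∀ r, x r ≠ 0)
    (hinner : ∀ r s, 0 ≤ ⟪x r, x s⟫)
    (w v : Fin n → ℝ)
    (hw : ∀ r, 0 ≤ w r) (hv : ∀ s, 0 ≤ v s)
    (a b : EuclideanSpace ℝ (Fin m))
    (ha : a = ∑ r, w r • x r) (hb : b = ∑ s, v s • x s)
    (ha0 : a ≠ 0) (hb0 : b ≠ 0) :
    cosSim a b ≥
      Finset.univ.inf' Finset.univ_nonempty
        (fun p : Fin n × Fin n => cosSim (x p.1) (x p.2)) := by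
  set c : ℝ := Finset.univ.inf' Finset.univ_nonempty
      (fun p : Fin n × Fin n => cosSim (x p.1) (x p.2)) with hc
  have hnormpos : ∀ r, (0:ℝ) < ‖x r‖ := fun r => norm_pos_iff.mpr (hx0 r)
  have hc0 : 0 ≤ c := by
    rw [hc]
    apply Finset.le_inf'
    intro p _
    exact div_nonneg (hinner p.1 p.2) (by positivity)
  have hkey : ∀ r s, c * (‖x r‖ * ‖x s‖) ≤ ⟪x r, x s⟫ := by
    intro r s
    have h1 : c ≤ cosSim (x r) (x s) :=
      Finset.inf'_le _ (Finset.mem_univ ((r, s) : Fin n × Fin n))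
    have hpos : (0:ℝ) < ‖x r‖ * ‖x s‖ := mul_pos (hnormpos r) (hnormpos s)
    rw [cosSim, le_div_iff₀ hpos] at h1
    exact h1
  have hSw : ‖a‖ ≤ ∑ r, w r * ‖x r‖ := by
    rw [ha]
    calc ‖∑ r, w r • x r‖ ≤ ∑ r, ‖w r • x r‖ := norm_sum_le _ _
      _ = ∑ r, w r * ‖x r‖ := by
          apply Finset.sum_congr rfl
          intro r _
          rw [norm_smul, Real.norm_eq_abs, abs_of_nonneg (hw r)]
  have hSv : ‖b‖ ≤ ∑ s, v s * ‖x s‖ := by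
    rw [hb]
    calc ‖∑ s, v s • x s‖ ≤ ∑ s, ‖v s • x s‖ := norm_sum_le _ _
      _ = ∑ s, v s * ‖x s‖ := by
          apply Finset.sum_congr rfl
          intro s _
          rw [norm_smul, Real.norm_eq_abs, abs_of_nonneg (hv s)]
  have hSw0 : (0:ℝ) ≤ ∑ r, w r * ‖x r‖ :=
    Finset.sum_nonneg fun r _ => mul_nonneg (hw r) (hnormpos r).le
  have hSv0 : (0:ℝ) ≤ ∑ s, v s * ‖x s‖ :=
    Finset.sum_nonneg fun s _ => mul_nonneg (hv s) (hnormpos s).le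
  have hab : ⟪a, b⟫ = ∑ r, ∑ s, w r * v s * ⟪x r, x s⟫ := by
    rw [ha, hb, sum_inner]
    apply Finset.sum_congr rfl
    intro r _
    rw [inner_sum]
    apply Finset.sum_congr rfl
    intro s _
    rw [real_inner_smul_left, real_inner_smul_right]
    ring
  have hlb : c * ((∑ r, w r * ‖x r‖) * (∑ s, v s * ‖x s‖)) ≤ ⟪a, b⟫ := by
    rw [hab]
    have : c * ((∑ r, w r * ‖x r‖) * (∑ s, v s * ‖x s‖))
        = ∑ r, ∑ s, (w r * ‖x r‖) * (v s * ‖x s‖) * c := by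
      rw [Finset.sum_mul_sum]
      rw [Finset.mul_sum]
      apply Finset.sum_congr rfl
      intro r _
      rw [Finset.mul_sum]
      apply Finset.sum_congr rfl
      intro s _
      ring
    rw [this]
    apply Finset.sum_le_sum
    intro r _
    apply Finset.sum_le_sum
    intro s _
    have := hkey r s
    have hws : 0 ≤ w r * v s := mul_nonneg (hw r) (hv s)
    calc (w r * ‖x r‖) * (v s * ‖x s‖) * c = (w r * v s) * (c * (‖x r‖ * ‖x s‖)) := by ring
      _ ≤ (w r * v s) * ⟪x r, x s⟫ := mul_le_mul_of_nonneg_left this hws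
      _ = w r * v s * ⟪x r, x s⟫ := rfl
  have hapos : (0:ℝ) < ‖a‖ := norm_pos_iff.mpr ha0
  have hbpos : (0:ℝ) < ‖b‖ := norm_pos_iff.mpr hb0
  rw [ge_iff_le, cosSim, le_div_iff₀ (mul_pos hapos hbpos)]
  calc c * (‖a‖ * ‖b‖) ≤ c * ((∑ r, w r * ‖x r‖) * (∑ s, v s * ‖x s‖)) := by
        apply mul_le_mul_of_nonneg_left _ hc0
        exact mul_le_mul hSw hSv hbpos.le hSw0
    _ ≤ ⟪a, b⟫ := hlb
end

section
/- Consider n agents with nonzero opinion vectors x_1(k),…,x_n(k) ∈ [0,1]^m \ {0} at time k, and let ε ∈ [0,1]. Define s_{ij} = sim(x_i(k), x_j(k)) if sim(x_i(k), x_j(k)) ≥ ε and s_{ij} = 0 otherwise, where sim(u,v) = ⟨u,v⟩/(‖u‖‖v‖), and let w_{ij} = s_{ij} / Σ_{p=1}^n s_{ip} (the denominator is positive since s_{ii} = 1 ≥ ε). Update the opinions by x_i(k+1) = Σ_{j=1}^n w_{ij} x_j(k). Then the opinion diameter d(X) = max_{i,j} arccos(sim(x_i, x_j)) is non-increasing: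 d(X(k+1)) ≤ d(X(k)). -/
open scoped RealInnerProductSpace

lemma inner_nonneg_of_nonneg {m : ℕ} {u v : EuclideanSpace ℝ (Fin m)}
    (hu : ∀ p, 0 ≤ u p) (hv : ∀ p, 0 ≤ v p) : 0 ≤ ⟪u, v⟫ := by
  rw [PiLp.inner_apply]
  exact Finset.sum_nonneg fun p _ => by
    simpa using mul_nonneg (hv p) (hu p)

lemma cosSim_nonneg {m : ℕ} {u v : EuclideanSpace ℝ (Fin m)}
    (hu : ∀ p, 0 ≤ u p) (hv : ∀ p, 0 ≤ v p) : 0 ≤ cosSim u v :=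
  div_nonneg (inner_nonneg_of_nonneg hu hv) (mul_nonneg (norm_nonneg _) (norm_nonneg _))

lemma cosSim_self {m : ℕ} {u : EuclideanSpace ℝ (Fin m)} (hu : u ≠ 0) :
    cosSim u u = 1 := by
  rw [cosSim, real_inner_self_eq_norm_mul_norm]
  exact div_self (by have := norm_pos_iff.mpr hu; positivity)

lemma cosSim_comm {m : ℕ} (u v : EuclideanSpace ℝ (Fin m)) :
    cosSim u v = cosSim v u := by
  rw [cosSim, cosSim, real_inner_comm, mul_comm]

/-- Cone lemma: a nonnegative cone combination is at least as similar to `u`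
as the least similar generator. -/
lemma cosSim_cone {m n : ℕ} {u : EuclideanSpace ℝ (Fin m)}
    (hu0 : u ≠ 0) (c : Fin n → ℝ) (hc : ∀ j, 0 ≤ c j)
    (v : Fin n → EuclideanSpace ℝ (Fin m)) (hv : ∀ j p, 0 ≤ v j p)
    (hV : (∑ j, c j • v j) ≠ 0)
    (a : ℝ) (ha : 0 ≤ a) (hav : ∀ j, a ≤ cosSim u (v j)) :
    a ≤ cosSim u (∑ j, c j • v j) := by
  set V := ∑ j, c j • v j with hVdef
  have hunorm : (0 : ℝ) < ‖u‖ := norm_pos_iff.mpr hu0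
  have hVnorm : (0 : ℝ) < ‖V‖ := norm_pos_iff.mpr hV
  rw [cosSim, le_div_iff₀ (by positivity)]
  have hinner : ⟪u, V⟫ = ∑ j, c j * ⟪u, v j⟫ := by
    rw [hVdef, inner_sum]
    exact Finset.sum_congr rfl fun j _ => real_inner_smul_right u (v j) (c j)
  have hstep : ∀ j, c j * (a * (‖u‖ * ‖v j‖)) ≤ c j * ⟪u, v j⟫ := by
    intro j
    apply mul_le_mul_of_nonneg_left _ (hc j)
    have := hav j
    rw [cosSim] at this
    rcases eq_or_ne (v j) 0 with h0 | h0
    · simp [h0]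
    · have hvn : (0 : ℝ) < ‖v j‖ := norm_pos_iff.mpr h0
      rwa [le_div_iff₀ (by positivity)] at this
  have h1 : a * ‖u‖ * (∑ j, c j * ‖v j‖) ≤ ⟪u, V⟫ := by
    rw [hinner]
    calc a * ‖u‖ * (∑ j, c j * ‖v j‖) = ∑ j, c j * (a * (‖u‖ * ‖v j‖)) := by
          rw [Finset.mul_sum]; exact Finset.sum_congr rfl fun j _ => by ring
      _ ≤ ∑ j, c j * ⟪u, v j⟫ := Finset.sum_le_sum fun j _ => hstep j
  have h2 : ‖V‖ ≤ ∑ j, c j * ‖v j‖ := by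
    calc ‖V‖ ≤ ∑ j, ‖c j • v j‖ := norm_sum_le _ _
      _ = ∑ j, c j * ‖v j‖ := Finset.sum_congr rfl fun j _ => by
          rw [norm_smul, Real.norm_eq_abs, abs_of_nonneg (hc j)]
  calc a * (‖u‖ * ‖V‖) = (a * ‖u‖) * ‖V‖ := by ring
    _ ≤ (a * ‖u‖) * (∑ j, c j * ‖v j‖) :=
        mul_le_mul_of_nonneg_left h2 (by positivity)
    _ = a * ‖u‖ * (∑ j, c j * ‖v j‖) := by ring
    _ ≤ ⟪u, V⟫ := h1

/-- **The opinion diameter is non-increasing under the angle-based ODRS update.**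
Agents hold nonzero opinions `x i ∈ [0,1]^m \ {0}`. With threshold `ε ∈ [0,1]`, set
`s i j = sim(x i, x j)` if `sim(x i, x j) ≥ ε`, else `0`; normalize `w i j = s i j / ∑ p, s i p`
and update `x' i = ∑ j, w i j • x j`. Then the diameter
`d(X) = max_{i,j} arccos (sim (x i) (x j))` satisfies `d(X') ≤ d(X)`. -/
theorem odrs_angle_diameter_nonincreasing
    {n m : ℕ} [NeZero n]
    (ε : ℝ) (hε : ε ∈ Set.Icc (0 : ℝ) 1)
    (x : Fin n → EuclideanSpace ℝ (Fin m))
    (hx : ∀ i, ∀ p : Fin m, x i p ∈ Set.Icc (0 : ℝ) 1)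
    (hx0 : ∀ i, x i ≠ 0)
    (s : Fin n → Fin n → ℝ)
    (hs : ∀ i j, s i j = if ε ≤ cosSim (x i) (x j) then cosSim (x i) (x j) else 0)
    (w : Fin n → Fin n → ℝ)
    (hw : ∀ i j, w i j = s i j / ∑ p, s i p)
    (x' : Fin n → EuclideanSpace ℝ (Fin m))
    (hx' : ∀ i, x' i = ∑ j, w i j • x j) :
    Finset.univ.sup' Finset.univ_nonempty
        (fun p : Fin n × Fin n => Real.arccos (cosSim (x' p.1) (x' p.2)))
      ≤ Finset.univ.sup' Finset.univ_nonempty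
        (fun p : Fin n × Fin n => Real.arccos (cosSim (x p.1) (x p.2))) := by
  obtain ⟨hε0, hε1⟩ := hε
  have hxnn : ∀ i p, 0 ≤ x i p := fun i p => (hx i p).1
  -- s is nonneg
  have hs_nonneg : ∀ i j, 0 ≤ s i j := by
    intro i j
    rw [hs]
    split
    · exact le_trans hε0 (by assumption)
    · exact le_refl 0
  -- s i i = 1
  have hsii : ∀ i, s i i = 1 := by
    intro i
    rw [hs, cosSim_self (hx0 i), if_pos hε1]
  -- sum positive
  have hsum_pos : ∀ i, (0 : ℝ) < ∑ p, s i p := by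
    intro i
    have : (1 : ℝ) ≤ ∑ p, s i p := by
      rw [← hsii i]
      exact Finset.single_le_sum (fun p _ => hs_nonneg i p) (Finset.mem_univ i)
    linarith
  have hw_nonneg : ∀ i j, 0 ≤ w i j := fun i j => by
    rw [hw]; exact div_nonneg (hs_nonneg i j) (le_of_lt (hsum_pos i))
  have hwii_pos : ∀ i, (0 : ℝ) < w i i := fun i => by
    rw [hw, hsii]; exact div_pos one_pos (hsum_pos i)
  -- coordinates of x' are nonneg
  have hx'app : ∀ i p, x' i p = ∑ j, w i j * x j p := by
    intro i p
    rw [hx']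
    induction (Finset.univ : Finset (Fin n)) using Finset.induction with
    | empty => simp
    | @insert a s h ih => rw [Finset.sum_insert h, Finset.sum_insert h, ← ih]; rfl
  have hx'nn : ∀ i p, 0 ≤ x' i p := by
    intro i p
    rw [hx'app]
    exact Finset.sum_nonneg fun j _ => mul_nonneg (hw_nonneg i j) (hxnn j p)
  -- x' i ≠ 0
  have hx'0 : ∀ i, x' i ≠ 0 := by
    intro i h0
    obtain ⟨p, hp⟩ : ∃ p, x i p ≠ 0 := by
      by_contra hcon
      push_neg at hcon
      exact hx0 i (by ext q; simpa using hcon q)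
    have hxp : 0 < x i p := lt_of_le_of_ne (hxnn i p) (Ne.symm hp)
    have : 0 < x' i p := by
      rw [hx'app]
      have h1 : w i i * x i p ≤ ∑ j, w i j * x j p :=
        Finset.single_le_sum (fun j _ => mul_nonneg (hw_nonneg i j) (hxnn j p))
          (Finset.mem_univ i)
      have h2 : 0 < w i i * x i p := mul_pos (hwii_pos i) hxp
      linarith
    rw [h0] at this
    simp at this
  -- key one-sided bound
  have key : ∀ (u : EuclideanSpace ℝ (Fin m)), u ≠ 0 → (∀ p, 0 ≤ u p) →
      ∀ i, ∃ b, cosSim u (x b) ≤ cosSim u (x' i) := by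
    intro u hu0 hunn i
    obtain ⟨b, _, hb⟩ := Finset.exists_mem_eq_inf' (Finset.univ_nonempty)
      (fun j => cosSim u (x j))
    refine ⟨b, ?_⟩
    rw [hx' i]
    have hinf_le : ∀ j, cosSim u (x b) ≤ cosSim u (x j) := by
      intro j
      rw [← hb]
      exact Finset.inf'_le _ (Finset.mem_univ j)
    have ha : 0 ≤ cosSim u (x b) := cosSim_nonneg hunn (hxnn b)
    exact cosSim_cone hu0 (w i) (hw_nonneg i) x (fun j p => hxnn j p)
      (by rw [← hx' i]; exact hx'0 i) _ ha hinf_le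
  apply Finset.sup'_le
  rintro ⟨i, j⟩ _
  obtain ⟨b, hb⟩ := key (x' i) (hx'0 i) (hx'nn i) j
  obtain ⟨a, ha⟩ := key (x b) (hx0 b) (hxnn b) i
  have hchain : cosSim (x a) (x b) ≤ cosSim (x' i) (x' j) := by
    calc cosSim (x a) (x b) = cosSim (x b) (x a) := cosSim_comm _ _
      _ ≤ cosSim (x b) (x' i) := ha
      _ = cosSim (x' i) (x b) := cosSim_comm _ _
      _ ≤ cosSim (x' i) (x' j) := hb
  have harccos : Real.arccos (cosSim (x' i) (x' j)) ≤ Real.arccos (cosSim (x a) (x b)) := by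
    unfold Real.arccos
    have := Real.monotone_arcsin hchain
    linarith
  exact le_trans harccos
    (Finset.le_sup' (f := fun p : Fin n × Fin n => Real.arccos (cosSim (x p.1) (x p.2)))
      (Finset.mem_univ (a, b)))
end

section
/- Under the angle-based ODRS update of nonzero opinion vectors x_1(k),…,x_n(k) ∈ [0,1]^m \ {0} with truncated cosine-similarity weights w_{ij} = s_{ij}/Σ_p s_{ip} (s_{ij} = sim(x_i,x_j) if sim(x_i,x_j) ≥ ε, else 0, for a threshold ε ∈ [0,1]) and x_i(k+1) = Σ_j w_{ij} x_j(k), the minimum pairwise cosine similarity is non-decreasing: for all i,j, sim(x_i(k+1), x_j(k+1)) ≥ min_{r,s ∈ {1,…,n}} sim(x_r(k), x_s(k)). -/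
open scoped RealInnerProductSpace

/-- **The minimum pairwise cosine similarity is non-decreasing under the angle-based ODRS
update.** Agents hold nonzero opinions `x i ∈ [0,1]^m \ {0}`. With threshold `ε ∈ [0,1]`,
set `s i j = sim(x i, x j)` if `sim(x i, x j) ≥ ε`, else `0`; normalize
`w i j = s i j / ∑ p, s i p` and update `x' i = ∑ j, w i j • x j`. Then for all `i, j`,
`sim (x' i) (x' j) ≥ min_{r,s} sim (x r) (x s)`. -/
theorem odrs_angle_min_similarity_nondecreasing
    {n m : ℕ} [NeZero n]
    (ε : ℝ) (hε : ε ∈ Set.Icc (0 : ℝ) 1)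
    (x : Fin n → EuclideanSpace ℝ (Fin m))
    (hx : ∀ i, ∀ p : Fin m, x i p ∈ Set.Icc (0 : ℝ) 1)
    (hx0 : ∀ i, x i ≠ 0)
    (s : Fin n → Fin n → ℝ)
    (hs : ∀ i j, s i j = if ε ≤ cosSim (x i) (x j) then cosSim (x i) (x j) else 0)
    (w : Fin n → Fin n → ℝ)
    (hw : ∀ i j, w i j = s i j / ∑ p, s i p)
    (x' : Fin n → EuclideanSpace ℝ (Fin m))
    (hx' : ∀ i, x' i = ∑ j, w i j • x j) :
    ∀ i j, cosSim (x' i) (x' j) ≥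
      Finset.univ.inf' Finset.univ_nonempty
        (fun p : Fin n × Fin n => cosSim (x p.1) (x p.2)) := by
  intro i j
  set μ := Finset.univ.inf' Finset.univ_nonempty
        (fun p : Fin n × Fin n => cosSim (x p.1) (x p.2)) with hμ
  have hinner_nonneg : ∀ a b : Fin n, 0 ≤ ⟪x a, x b⟫ := by
    intro a b
    rw [PiLp.inner_apply]
    refine Finset.sum_nonneg fun p _ => ?_
    simp only [RCLike.inner_apply, starRingEnd_apply, star_trivial]
    exact mul_nonneg (hx b p).1 (hx a p).1
  have hnorm_pos : ∀ a, 0 < ‖x a‖ := fun a => norm_pos_iff.2 (hx0 a)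
  have hcos_nonneg : ∀ a b, 0 ≤ cosSim (x a) (x b) := fun a b =>
    div_nonneg (hinner_nonneg a b) (mul_nonneg (norm_nonneg _) (norm_nonneg _))
  have hμ_nonneg : 0 ≤ μ := Finset.le_inf' _ _ (fun p _ => hcos_nonneg p.1 p.2)
  have hμ_le : ∀ a b, μ ≤ cosSim (x a) (x b) := fun a b =>
    Finset.inf'_le _ (Finset.mem_univ (a, b))
  have hcos_self : ∀ a, cosSim (x a) (x a) = 1 := by
    intro a
    rw [cosSim, real_inner_self_eq_norm_mul_norm, div_self
      (mul_pos (hnorm_pos a) (hnorm_pos a)).ne']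
  have hs_nonneg : ∀ a b, 0 ≤ s a b := by
    intro a b; rw [hs]
    split
    · exact hcos_nonneg a b
    · exact le_refl 0
  have hsaa : ∀ a, s a a = 1 := by
    intro a
    rw [hs, if_pos (by rw [hcos_self a]; exact hε.2), hcos_self a]
  have hsum_pos : ∀ a, 0 < ∑ p, s a p := by
    intro a
    have := Finset.single_le_sum (fun p _ => hs_nonneg a p) (Finset.mem_univ a)
    rw [hsaa a] at this
    linarith
  have hw_nonneg : ∀ a b, 0 ≤ w a b := fun a b => by
    rw [hw]; exact div_nonneg (hs_nonneg a b) (hsum_pos a).le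
  have hw_diag_pos : ∀ a, 0 < w a a := fun a => by
    rw [hw, hsaa]; exact div_pos one_pos (hsum_pos a)
  have hx'_apply : ∀ a (p : Fin m), x' a p = ∑ q, w a q * x q p := by
    intro a p
    rw [hx']
    induction (Finset.univ : Finset (Fin n)) using Finset.induction with
    | empty => simp
    | insert _ _ h ih => simp [Finset.sum_insert h, ih]
  have hx'_ne : ∀ a, x' a ≠ 0 := by
    intro a h0
    obtain ⟨p, hp⟩ : ∃ p, x a p ≠ 0 := by
      by_contra h
      push_neg at h
      exact hx0 a (by ext q; simpa using h q)
    have hp' : 0 < x a p := lt_of_le_of_ne (hx a p).1 (Ne.symm hp)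
    have hpos : 0 < x' a p := by
      rw [hx'_apply]
      refine Finset.sum_pos' (fun q _ => mul_nonneg (hw_nonneg a q) (hx q p).1)
        ⟨a, Finset.mem_univ a, mul_pos (hw_diag_pos a) hp'⟩
    rw [h0] at hpos
    simp at hpos
  have hnorm'_pos : ∀ a, 0 < ‖x' a‖ := fun a => norm_pos_iff.2 (hx'_ne a)
  have hS_le : ∀ a, ‖x' a‖ ≤ ∑ p, w a p * ‖x p‖ := by
    intro a
    rw [hx' a]
    refine (norm_sum_le _ _).trans_eq ?_
    refine Finset.sum_congr rfl fun p _ => ?_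
    rw [norm_smul, Real.norm_eq_abs, abs_of_nonneg (hw_nonneg a p)]
  have hinner_expand : ⟪x' i, x' j⟫ = ∑ q, ∑ p, w i p * w j q * ⟪x p, x q⟫ := by
    rw [hx' i, hx' j, inner_sum]
    refine Finset.sum_congr rfl fun q _ => ?_
    rw [sum_inner]
    refine Finset.sum_congr rfl fun p _ => ?_
    rw [real_inner_smul_left, real_inner_smul_right]
    ring
  have hterm : ∀ a b : Fin n, μ * (‖x a‖ * ‖x b‖) ≤ ⟪x a, x b⟫ := by
    intro a b
    have := hμ_le a b
    rw [cosSim, le_div_iff₀ (mul_pos (hnorm_pos a) (hnorm_pos b))] at this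
    exact this
  have hmain : μ * ((∑ p, w i p * ‖x p‖) * (∑ q, w j q * ‖x q‖)) ≤ ⟪x' i, x' j⟫ := by
    rw [hinner_expand]
    have : μ * ((∑ p, w i p * ‖x p‖) * (∑ q, w j q * ‖x q‖))
        = ∑ q, ∑ p, w i p * w j q * (μ * (‖x p‖ * ‖x q‖)) := by
      rw [Finset.sum_mul_sum]
      simp_rw [Finset.mul_sum]
      rw [Finset.sum_comm]
      exact Finset.sum_congr rfl fun q _ => Finset.sum_congr rfl fun p _ => by ring
    rw [this]
    refine Finset.sum_le_sum fun q _ => Finset.sum_le_sum fun p _ => ?_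
    exact mul_le_mul_of_nonneg_left (hterm p q)
      (mul_nonneg (hw_nonneg i p) (hw_nonneg j q))
  rw [ge_iff_le, cosSim, le_div_iff₀ (mul_pos (hnorm'_pos i) (hnorm'_pos j))]
  calc μ * (‖x' i‖ * ‖x' j‖)
      ≤ μ * ((∑ p, w i p * ‖x p‖) * (∑ q, w j q * ‖x q‖)) := by
        refine mul_le_mul_of_nonneg_left ?_ hμ_nonneg
        exact mul_le_mul (hS_le i) (hS_le j) (norm_nonneg _)
          (Finset.sum_nonneg fun p _ => mul_nonneg (hw_nonneg i p) (norm_nonneg _))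
    _ ≤ ⟪x' i, x' j⟫ := hmain
end

section
/- Consider the multidimensional Hegselmann–Krause dynamics: n agents with opinions x_i(k) ∈ ℝ^m evolve by x_i(k+1) = (1/|N_i(k)|) Σ_{j ∈ N_i(k)} x_j(k), where N_i(k) = { j ∈ {1,…,n} : ‖x_i(k) − x_j(k)‖ ≤ R } for a fixed confidence radius R > 0 and ‖·‖ the Euclidean norm. Then for any initial condition the system terminates in finite time: there exists K ∈ ℕ such that x_i(k) = x_i(K) for every agent i and every k ≥ K. -/
open Finset Filter Topology RealInnerProductSpace

namespace HKAux

variable {n m : ℕ}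

noncomputable def nbhd (R : ℝ) (y : Fin n → EuclideanSpace ℝ (Fin m)) (i : Fin n) :
    Finset (Fin n) := Finset.univ.filter fun j => ‖y i - y j‖ ≤ R

noncomputable def hkStep (R : ℝ) (y : Fin n → EuclideanSpace ℝ (Fin m)) :
    Fin n → EuclideanSpace ℝ (Fin m) :=
  fun i => ((nbhd R y i).card : ℝ)⁻¹ • ∑ j ∈ nbhd R y i, y j

noncomputable def energy (R : ℝ) (y : Fin n → EuclideanSpace ℝ (Fin m)) : ℝ :=
  ∑ i, ∑ j, min (‖y i - y j‖ ^ 2) (R ^ 2)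

lemma mem_nbhd {R : ℝ} {y : Fin n → EuclideanSpace ℝ (Fin m)} {i j : Fin n} :
    j ∈ nbhd R y i ↔ ‖y i - y j‖ ≤ R := by simp [nbhd]

lemma mem_nbhd_self {R : ℝ} (hR : 0 ≤ R) (y : Fin n → EuclideanSpace ℝ (Fin m)) (i : Fin n) :
    i ∈ nbhd R y i := by simp [mem_nbhd, hR]

lemma nbhd_symm {R : ℝ} {y : Fin n → EuclideanSpace ℝ (Fin m)} {i j : Fin n} :
    j ∈ nbhd R y i ↔ i ∈ nbhd R y j := by
  rw [mem_nbhd, mem_nbhd, norm_sub_rev]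

lemma card_nbhd_pos {R : ℝ} (hR : 0 ≤ R) (y : Fin n → EuclideanSpace ℝ (Fin m)) (i : Fin n) :
    0 < ((nbhd R y i).card : ℝ) := by
  have : (nbhd R y i).Nonempty := ⟨i, mem_nbhd_self hR y i⟩
  exact_mod_cast Finset.card_pos.2 this

lemma sum_nbhd {R : ℝ} (hR : 0 ≤ R) (y : Fin n → EuclideanSpace ℝ (Fin m)) (i : Fin n) :
    ∑ j ∈ nbhd R y i, y j = ((nbhd R y i).card : ℝ) • hkStep R y i := by
  rw [hkStep, smul_inv_smul₀ (card_nbhd_pos hR y i).ne']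

lemma sum_nbhd_sub {R : ℝ} (hR : 0 ≤ R) (y : Fin n → EuclideanSpace ℝ (Fin m)) (i : Fin n) :
    ∑ j ∈ nbhd R y i, (y j - y i) = ((nbhd R y i).card : ℝ) • (hkStep R y i - y i) := by
  rw [Finset.sum_sub_distrib, Finset.sum_const, sum_nbhd hR, smul_sub,
    ← Nat.cast_smul_eq_nsmul ℝ]

lemma sum_nbhd_swap (R : ℝ) (y : Fin n → EuclideanSpace ℝ (Fin m)) (f : Fin n → Fin n → ℝ) :
    ∑ i, ∑ j ∈ nbhd R y i, f i j = ∑ i, ∑ j ∈ nbhd R y i, f j i := by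
  unfold nbhd
  calc ∑ i, ∑ j ∈ Finset.univ.filter (fun j => ‖y i - y j‖ ≤ R), f i j
      = ∑ i : Fin n, ∑ j : Fin n, (if ‖y i - y j‖ ≤ R then f i j else 0) := by
        simp [Finset.sum_filter]
    _ = ∑ j : Fin n, ∑ i : Fin n, (if ‖y i - y j‖ ≤ R then f i j else 0) := Finset.sum_comm
    _ = ∑ i : Fin n, ∑ j : Fin n, (if ‖y i - y j‖ ≤ R then f j i else 0) := by
        refine Finset.sum_congr rfl fun i _ => Finset.sum_congr rfl fun j _ => ?_
        rw [norm_sub_rev]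
    _ = ∑ i, ∑ j ∈ Finset.univ.filter (fun j => ‖y i - y j‖ ≤ R), f j i := by
        simp [Finset.sum_filter]

lemma energy_nonneg (R : ℝ) (y : Fin n → EuclideanSpace ℝ (Fin m)) : 0 ≤ energy R y :=
  Finset.sum_nonneg fun i _ => Finset.sum_nonneg fun j _ => le_min (sq_nonneg _) (sq_nonneg _)


-- THE KEY LEMMA
theorem energy_step {R : ℝ} (hR : 0 ≤ R) (y : Fin n → EuclideanSpace ℝ (Fin m)) :
    energy R (hkStep R y) + 4 * ∑ i, ‖hkStep R y i - y i‖ ^ 2 ≤ energy R y := by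
  set y' := hkStep R y with hy'
  set Δ : Fin n → EuclideanSpace ℝ (Fin m) := fun i => y' i - y i with hΔ
  have claim1 : energy R y' + (∑ i, ∑ j ∈ nbhd R y i, ‖y i - y j‖ ^ 2)
      ≤ energy R y + ∑ i, ∑ j ∈ nbhd R y i, ‖y' i - y' j‖ ^ 2 := by
    have eA : ∀ z : Fin n → EuclideanSpace ℝ (Fin m),
        ∑ i, ∑ j ∈ nbhd R y i, ‖z i - z j‖ ^ 2
          = ∑ i : Fin n, ∑ j : Fin n, (if ‖y i - y j‖ ≤ R then ‖z i - z j‖ ^ 2 else 0) := by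
      intro z; unfold nbhd; simp [Finset.sum_filter]
    rw [eA, eA, energy, energy, ← Finset.sum_add_distrib, ← Finset.sum_add_distrib]
    refine Finset.sum_le_sum fun i _ => ?_
    rw [← Finset.sum_add_distrib, ← Finset.sum_add_distrib]
    refine Finset.sum_le_sum fun j _ => ?_
    by_cases h : ‖y i - y j‖ ≤ R
    · simp only [if_pos h]
      have h1 : min (‖y i - y j‖ ^ 2) (R ^ 2) = ‖y i - y j‖ ^ 2 :=
        min_eq_left (by nlinarith [norm_nonneg (y i - y j)])
      have h2 := min_le_left (‖y' i - y' j‖ ^ 2) (R ^ 2)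
      linarith
    · simp only [if_neg h]
      push_neg at h
      have h1 : min (‖y i - y j‖ ^ 2) (R ^ 2) = R ^ 2 :=
        min_eq_right (by nlinarith [norm_nonneg (y i - y j)])
      have h2 := min_le_right (‖y' i - y' j‖ ^ 2) (R ^ 2)
      linarith
  -- notation
  set W : ℝ := ∑ i, ((nbhd R y i).card : ℝ) * ‖Δ i‖ ^ 2 with hW
  have hsum_delta : ∀ i, ∑ j ∈ nbhd R y i, (y i - y j) = -(((nbhd R y i).card : ℝ) • Δ i) := by
    intro i
    have h1 := sum_nbhd_sub hR y i
    have h2 : ∑ j ∈ nbhd R y i, (y i - y j) = -∑ j ∈ nbhd R y i, (y j - y i) := by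
      rw [← Finset.sum_neg_distrib]
      exact Finset.sum_congr rfl fun j _ => (neg_sub _ _).symm
    rw [h2, h1]
  have hT1 : ∑ i, ∑ j ∈ nbhd R y i, (⟪y i - y j, Δ i⟫) = -W := by
    rw [hW, ← Finset.sum_neg_distrib]
    refine Finset.sum_congr rfl fun i _ => ?_
    rw [← sum_inner, hsum_delta i, inner_neg_left, real_inner_smul_left,
      real_inner_self_eq_norm_sq]
  have hT2 : ∑ i, ∑ j ∈ nbhd R y i, (⟪y i - y j, Δ j⟫) = W := by
    rw [sum_nbhd_swap R y (fun i j => ⟪y i - y j, Δ j⟫), hW]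
    refine Finset.sum_congr rfl fun i _ => ?_
    have : ∑ j ∈ nbhd R y i, (⟪y j - y i, Δ i⟫) = ⟪∑ j ∈ nbhd R y i, (y j - y i), Δ i⟫ :=
      (sum_inner _ _ _).symm
    rw [this, sum_nbhd_sub hR y i, real_inner_smul_left, real_inner_self_eq_norm_sq]
  have hS1 : ∑ i, ∑ j ∈ nbhd R y i, (⟪y i - y j, Δ i - Δ j⟫) = -2 * W := by
    have : ∀ i, ∀ j ∈ nbhd R y i,
        (⟪y i - y j, Δ i - Δ j⟫) = (⟪y i - y j, Δ i⟫) - (⟪y i - y j, Δ j⟫) :=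
      fun i j _ => inner_sub_right _ _ _
    calc ∑ i, ∑ j ∈ nbhd R y i, (⟪y i - y j, Δ i - Δ j⟫)
        = ∑ i, ∑ j ∈ nbhd R y i, ((⟪y i - y j, Δ i⟫) - (⟪y i - y j, Δ j⟫)) := by
          exact Finset.sum_congr rfl fun i _ => Finset.sum_congr rfl fun j hj => this i j hj
      _ = (∑ i, ∑ j ∈ nbhd R y i, (⟪y i - y j, Δ i⟫))
            - ∑ i, ∑ j ∈ nbhd R y i, (⟪y i - y j, Δ j⟫) := by
          rw [← Finset.sum_sub_distrib]
          exact Finset.sum_congr rfl fun i _ => Finset.sum_sub_distrib _ _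
      _ = -W - W := by rw [hT1, hT2]
      _ = -2 * W := by ring
  have hS2 : ∑ i, ∑ j ∈ nbhd R y i, ‖Δ i - Δ j‖ ^ 2 ≤ 4 * W - 4 * ∑ i, ‖Δ i‖ ^ 2 := by
    have hconst : ∀ i, ∑ j ∈ nbhd R y i, ‖Δ i‖ ^ 2 = ((nbhd R y i).card : ℝ) * ‖Δ i‖ ^ 2 := by
      intro i; rw [Finset.sum_const, nsmul_eq_mul]
    have hper : ∀ i, ∑ j ∈ nbhd R y i, ‖Δ i - Δ j‖ ^ 2
        ≤ (∑ j ∈ nbhd R y i, (2 * ‖Δ i‖ ^ 2 + 2 * ‖Δ j‖ ^ 2)) - 4 * ‖Δ i‖ ^ 2 := by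
      intro i
      have hmem := mem_nbhd_self hR y i
      have hbd : ∀ j ∈ (nbhd R y i).erase i, ‖Δ i - Δ j‖ ^ 2 ≤ 2 * ‖Δ i‖ ^ 2 + 2 * ‖Δ j‖ ^ 2 := by
        intro j _
        have h := norm_sub_le (Δ i) (Δ j)
        nlinarith [norm_nonneg (Δ i), norm_nonneg (Δ j), norm_nonneg (Δ i - Δ j),
          sq_nonneg (‖Δ i‖ - ‖Δ j‖)]
      have h1 := Finset.sum_le_sum hbd
      have e4 : ∑ j ∈ nbhd R y i, ‖Δ i - Δ j‖ ^ 2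
          = ∑ j ∈ (nbhd R y i).erase i, ‖Δ i - Δ j‖ ^ 2 := by
        rw [← Finset.add_sum_erase _ _ hmem]; simp
      have e5 : ∑ j ∈ nbhd R y i, (2 * ‖Δ i‖ ^ 2 + 2 * ‖Δ j‖ ^ 2)
          = (2 * ‖Δ i‖ ^ 2 + 2 * ‖Δ i‖ ^ 2)
            + ∑ j ∈ (nbhd R y i).erase i, (2 * ‖Δ i‖ ^ 2 + 2 * ‖Δ j‖ ^ 2) :=
        (Finset.add_sum_erase _ _ hmem).symm
      rw [e4, e5]; linarith
    have hsum2 : ∑ i, ((∑ j ∈ nbhd R y i, (2 * ‖Δ i‖ ^ 2 + 2 * ‖Δ j‖ ^ 2)) - 4 * ‖Δ i‖ ^ 2)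
        = 4 * W - 4 * ∑ i, ‖Δ i‖ ^ 2 := by
      have e1 : ∀ i, ∑ j ∈ nbhd R y i, (2 * ‖Δ i‖ ^ 2 + 2 * ‖Δ j‖ ^ 2)
          = (∑ j ∈ nbhd R y i, 2 * ‖Δ i‖ ^ 2) + ∑ j ∈ nbhd R y i, 2 * ‖Δ j‖ ^ 2 :=
        fun i => Finset.sum_add_distrib
      have e2 : ∑ i, ∑ j ∈ nbhd R y i, 2 * ‖Δ j‖ ^ 2 = ∑ i, ∑ j ∈ nbhd R y i, 2 * ‖Δ i‖ ^ 2 :=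
        sum_nbhd_swap R y (fun i j => 2 * ‖Δ j‖ ^ 2)
      have e3 : ∀ i, ∑ j ∈ nbhd R y i, 2 * ‖Δ i‖ ^ 2
          = 2 * (((nbhd R y i).card : ℝ) * ‖Δ i‖ ^ 2) := by
        intro i; rw [Finset.sum_const, nsmul_eq_mul]; ring
      simp only [e1]
      rw [Finset.sum_sub_distrib, Finset.sum_add_distrib, e2]
      simp only [e3]
      rw [← Finset.mul_sum, ← Finset.mul_sum, hW]
      ring
    calc ∑ i, ∑ j ∈ nbhd R y i, ‖Δ i - Δ j‖ ^ 2
        ≤ ∑ i, ((∑ j ∈ nbhd R y i, (2 * ‖Δ i‖ ^ 2 + 2 * ‖Δ j‖ ^ 2)) - 4 * ‖Δ i‖ ^ 2) :=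
          Finset.sum_le_sum fun i _ => hper i
      _ = 4 * W - 4 * ∑ i, ‖Δ i‖ ^ 2 := hsum2
  have hexpand : ∑ i, ∑ j ∈ nbhd R y i, ‖y' i - y' j‖ ^ 2
      = (∑ i, ∑ j ∈ nbhd R y i, ‖y i - y j‖ ^ 2)
        + 2 * (∑ i, ∑ j ∈ nbhd R y i, (⟪y i - y j, Δ i - Δ j⟫))
        + ∑ i, ∑ j ∈ nbhd R y i, ‖Δ i - Δ j‖ ^ 2 := by
    rw [Finset.mul_sum, ← Finset.sum_add_distrib, ← Finset.sum_add_distrib]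
    refine Finset.sum_congr rfl fun i _ => ?_
    rw [Finset.mul_sum, ← Finset.sum_add_distrib, ← Finset.sum_add_distrib]
    refine Finset.sum_congr rfl fun j _ => ?_
    have hv : y' i - y' j = (y i - y j) + (Δ i - Δ j) := by
      simp only [hΔ]; abel
    rw [hv, norm_add_sq_real]
  have hfin : ∑ i, ∑ j ∈ nbhd R y i, ‖y' i - y' j‖ ^ 2
      ≤ (∑ i, ∑ j ∈ nbhd R y i, ‖y i - y j‖ ^ 2) - 4 * ∑ i, ‖Δ i‖ ^ 2 := by
    rw [hexpand, hS1]
    linarith [hS2]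
  linarith [claim1, hfin]

lemma hkStep_norm_le {R : ℝ} (hR : 0 ≤ R) (y : Fin n → EuclideanSpace ℝ (Fin m)) :
    ‖hkStep R y‖ ≤ ‖y‖ := by
  rw [pi_norm_le_iff_of_nonneg (norm_nonneg y)]
  intro i
  have hc : 0 < ((nbhd R y i).card : ℝ) := card_nbhd_pos hR y i
  have h1 : ‖hkStep R y i‖ ≤ ((nbhd R y i).card : ℝ)⁻¹ * ∑ j ∈ nbhd R y i, ‖y j‖ := by
    rw [hkStep, norm_smul, Real.norm_eq_abs, abs_inv, abs_of_nonneg (Nat.cast_nonneg _)]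
    gcongr
    exact norm_sum_le _ _
  have h2 : ∑ j ∈ nbhd R y i, ‖y j‖ ≤ ((nbhd R y i).card : ℝ) * ‖y‖ := by
    calc ∑ j ∈ nbhd R y i, ‖y j‖ ≤ ∑ _j ∈ nbhd R y i, ‖y‖ :=
          Finset.sum_le_sum fun j _ => norm_le_pi_norm y j
      _ = ((nbhd R y i).card : ℝ) * ‖y‖ := by rw [Finset.sum_const, nsmul_eq_mul]
  calc ‖hkStep R y i‖ ≤ ((nbhd R y i).card : ℝ)⁻¹ * (((nbhd R y i).card : ℝ) * ‖y‖) := by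
        refine h1.trans ?_
        gcongr
    _ = ‖y‖ := by field_simp
end HKAux

open HKAux

/-- **Finite-time termination of the multidimensional Hegselmann–Krause dynamics.**
`n` agents with opinions `x k i ∈ ℝ^m` evolve by averaging over the neighbors within
Euclidean distance `R`: `x (k+1) i = (1/|N_i(k)|) ∑_{j ∈ N_i(k)} x k j` with
`N_i(k) = { j : ‖x k i - x k j‖ ≤ R }`. Then the system terminates in finite time:
there is `K` such that `x k i = x K i` for every `i` and every `k ≥ K`. -/
theorem hegselmann_krause_terminates
    {n m : ℕ}
    (R : ℝ) (hR : 0 < R)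
    (x : ℕ → Fin n → EuclideanSpace ℝ (Fin m))
    (hdyn : ∀ k i,
      x (k + 1) i =
        (((Finset.univ.filter fun j => ‖x k i - x k j‖ ≤ R).card : ℝ))⁻¹ •
          ∑ j ∈ Finset.univ.filter fun j => ‖x k i - x k j‖ ≤ R, x k j) :
    ∃ K : ℕ, ∀ k, K ≤ k → ∀ i, x k i = x K i := by
  classical
  have hR0 : (0:ℝ) ≤ R := hR.le
  have hx : ∀ k, x (k + 1) = hkStep R (x k) := by
    intro k; funext i; rw [hdyn k i]; rfl
  -- energy dissipation along the trajectory
  have hstep : ∀ k, energy R (x (k+1)) + 4 * ∑ i, ‖x (k+1) i - x k i‖ ^ 2 ≤ energy R (x k) := by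
    intro k; rw [hx k]; exact energy_step hR0 (x k)
  have hsumnn : ∀ k, (0:ℝ) ≤ ∑ i, ‖x (k+1) i - x k i‖ ^ 2 :=
    fun k => Finset.sum_nonneg fun i _ => sq_nonneg _
  have hmono : ∀ k, energy R (x (k+1)) ≤ energy R (x k) := fun k => by
    linarith [hstep k, hsumnn k]
  have hanti : Antitone fun k => energy R (x k) := antitone_nat_of_succ_le hmono
  have hbdd : BddBelow (Set.range fun k => energy R (x k)) := by
    refine ⟨0, ?_⟩
    rintro v ⟨k, rfl⟩
    exact energy_nonneg R (x k)
  set Einf := ⨅ k, energy R (x k) with hEinfdef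
  have hEtend : Tendsto (fun k => energy R (x k)) atTop (𝓝 Einf) :=
    tendsto_atTop_ciInf hanti hbdd
  have hEinf_le : ∀ k, Einf ≤ energy R (x k) := fun k => ciInf_le hbdd k
  -- movement tends to zero
  have hEtend' : Tendsto (fun k => energy R (x (k+1))) atTop (𝓝 Einf) :=
    hEtend.comp (tendsto_add_atTop_nat 1)
  have hdrop : Tendsto (fun k => energy R (x k) - energy R (x (k+1))) atTop (𝓝 0) := by
    simpa using hEtend.sub hEtend'
  have hsum0 : Tendsto (fun k => ∑ i, ‖x (k+1) i - x k i‖ ^ 2) atTop (𝓝 0) := by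
    refine squeeze_zero hsumnn (fun k => ?_) hdrop
    linarith [hstep k, hsumnn k]
  have hΔ0 : ∀ i, Tendsto (fun k => x (k+1) i - x k i) atTop (𝓝 0) := by
    intro i
    rw [tendsto_zero_iff_norm_tendsto_zero]
    have h1 : ∀ k, ‖x (k+1) i - x k i‖ ^ 2 ≤ ∑ i', ‖x (k+1) i' - x k i'‖ ^ 2 :=
      fun k => Finset.single_le_sum (f := fun i' => ‖x (k+1) i' - x k i'‖ ^ 2)
        (fun i' _ => sq_nonneg _) (Finset.mem_univ i)
    have hsq : Tendsto (fun k => ‖x (k+1) i - x k i‖ ^ 2) atTop (𝓝 0) :=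
      squeeze_zero (fun k => sq_nonneg _) h1 hsum0
    have := hsq.sqrt
    simpa [Real.sqrt_sq (norm_nonneg _)] using this
  -- boundedness and convergent subsequence
  have hxballs : ∀ k, x k ∈ Metric.closedBall (0 : Fin n → EuclideanSpace ℝ (Fin m)) ‖x 0‖ := by
    intro k
    rw [Metric.mem_closedBall, dist_zero_right]
    induction k with
    | zero => exact le_refl _
    | succ k ih => rw [hx k]; exact (hkStep_norm_le hR0 (x k)).trans ih
  obtain ⟨X, -, φ, hφmono, hφtend⟩ :=
    tendsto_subseq_of_bounded Metric.isBounded_closedBall hxballs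
  -- constant neighbourhood structure along a further subsequence
  have hfreq : ∃ G : Fin n → Finset (Fin n),
      ∃ᶠ t in atTop, (fun i => nbhd R (x (φ t)) i) = G := by
    by_contra hcon
    push_neg at hcon
    have h1 : ∀ G : Fin n → Finset (Fin n),
        ∀ᶠ t in atTop, ¬((fun i => nbhd R (x (φ t)) i) = G) := by
      intro G
      have := hcon G
      exact this
    have h2 : ∀ᶠ t in atTop, ∀ G : Fin n → Finset (Fin n),
        ¬((fun i => nbhd R (x (φ t)) i) = G) := Filter.eventually_all.2 h1
    rcases h2.exists with ⟨t, ht⟩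
    exact ht _ rfl
  obtain ⟨G, hGfreq⟩ := hfreq
  obtain ⟨σ, hσmono, hσ⟩ := Filter.extraction_of_frequently_atTop hGfreq
  set ψ : ℕ → ℕ := φ ∘ σ with hψdef
  have hψmono : StrictMono ψ := hφmono.comp hσmono
  have hψtend : Tendsto (fun t => x (ψ t)) atTop (𝓝 X) := hφtend.comp hσmono.tendsto_atTop
  have hGψ : ∀ t i, nbhd R (x (ψ t)) i = G i := fun t i => congrFun (hσ t) i
  have hXi : ∀ i, Tendsto (fun t => x (ψ t) i) atTop (𝓝 (X i)) :=
    fun i => (tendsto_pi_nhds.1 hψtend i)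
  -- properties of G and X
  have hGself : ∀ i, i ∈ G i := fun i => hGψ 0 i ▸ mem_nbhd_self hR0 (x (ψ 0)) i
  have hGcard : ∀ i, 0 < ((G i).card : ℝ) := by
    intro i
    have : (G i).Nonempty := ⟨i, hGself i⟩
    exact_mod_cast Finset.card_pos.2 this
  have hGedge : ∀ i j, j ∈ G i → ‖X i - X j‖ ≤ R := by
    intro i j hj
    have hev : ∀ t, ‖x (ψ t) i - x (ψ t) j‖ ≤ R := by
      intro t
      have hmem : j ∈ nbhd R (x (ψ t)) i := (hGψ t i).symm ▸ hj
      exact mem_nbhd.1 hmem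
    exact le_of_tendsto (((hXi i).sub (hXi j)).norm) (Filter.Eventually.of_forall hev)
  have hGnonedge : ∀ i j, j ∉ G i → R ≤ ‖X i - X j‖ := by
    intro i j hj
    have hev : ∀ t, R ≤ ‖x (ψ t) i - x (ψ t) j‖ := by
      intro t
      have hmem : j ∉ nbhd R (x (ψ t)) i := (hGψ t i).symm ▸ hj
      exact le_of_lt (not_le.1 fun hc => hmem (mem_nbhd.2 hc))
    exact ge_of_tendsto (((hXi i).sub (hXi j)).norm) (Filter.Eventually.of_forall hev)
  -- fixed point equation for X
  have hfix : ∀ i, ((G i).card : ℝ) • X i = ∑ j ∈ G i, X j := by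
    intro i
    have h1 : Tendsto (fun t => x (ψ t + 1) i) atTop (𝓝 (X i)) := by
      have heq : (fun t => x (ψ t + 1) i)
          = fun t => x (ψ t) i + (x (ψ t + 1) i - x (ψ t) i) := by
        funext t; abel
      rw [heq]
      have h2 : Tendsto (fun t => x (ψ t + 1) i - x (ψ t) i) atTop (𝓝 0) :=
        (hΔ0 i).comp hψmono.tendsto_atTop
      simpa using (hXi i).add h2
    have h2 : Tendsto (fun t => x (ψ t + 1) i) atTop
        (𝓝 (((G i).card : ℝ)⁻¹ • ∑ j ∈ G i, X j)) := by
      have heq : ∀ t, x (ψ t + 1) i = ((G i).card : ℝ)⁻¹ • ∑ j ∈ G i, x (ψ t) j := by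
        intro t
        rw [hx (ψ t)]
        show ((nbhd R (x (ψ t)) i).card : ℝ)⁻¹ • ∑ j ∈ nbhd R (x (ψ t)) i, x (ψ t) j = _
        rw [hGψ t i]
      simp only [heq]
      exact (tendsto_finset_sum _ fun j _ => hXi j).const_smul _
    have h3 := tendsto_nhds_unique h1 h2
    rw [h3, smul_inv_smul₀ (hGcard i).ne']
  have hzero : ∀ i, ∑ j ∈ G i, (X j - X i) = 0 := by
    intro i
    rw [Finset.sum_sub_distrib, Finset.sum_const, ← hfix i, ← Nat.cast_smul_eq_nsmul ℝ, sub_self]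
  -- harmonicity: all edges connect equal points
  have hGsub : ∀ i, G i = nbhd R (x (ψ 0)) i := fun i => (hGψ 0 i).symm
  have hedgesq : ∑ i, ∑ j ∈ G i, ‖X i - X j‖ ^ 2 = 0 := by
    have e0 : ∀ i, ∀ j ∈ G i, ‖X i - X j‖ ^ 2 = (⟪X i - X j, X i⟫) - (⟪X i - X j, X j⟫) := by
      intro i j _
      rw [← inner_sub_right, real_inner_self_eq_norm_sq]
    have e1 : ∑ i, ∑ j ∈ G i, ‖X i - X j‖ ^ 2
        = (∑ i, ∑ j ∈ G i, (⟪X i - X j, X i⟫)) - ∑ i, ∑ j ∈ G i, (⟪X i - X j, X j⟫) := by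
      rw [← Finset.sum_sub_distrib]
      refine Finset.sum_congr rfl fun i _ => ?_
      rw [← Finset.sum_sub_distrib]
      exact Finset.sum_congr rfl fun j hj => e0 i j hj
    have e2 : ∑ i, ∑ j ∈ G i, (⟪X i - X j, X i⟫) = 0 := by
      refine Finset.sum_eq_zero fun i _ => ?_
      rw [← sum_inner]
      have : ∑ j ∈ G i, (X i - X j) = 0 := by
        have h := hzero i
        have h2 : ∑ j ∈ G i, (X i - X j) = -∑ j ∈ G i, (X j - X i) := by
          rw [← Finset.sum_neg_distrib]
          exact Finset.sum_congr rfl fun j _ => (neg_sub _ _).symm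
        rw [h2, h, neg_zero]
      rw [this, inner_zero_left]
    have e3 : ∑ i, ∑ j ∈ G i, (⟪X i - X j, X j⟫) = 0 := by
      have hswap : ∑ i, ∑ j ∈ G i, (⟪X i - X j, X j⟫)
          = ∑ i, ∑ j ∈ G i, (⟪X j - X i, X i⟫) := by
        simp only [hGsub]
        exact sum_nbhd_swap R (x (ψ 0)) (fun i j => ⟪X i - X j, X j⟫)
      rw [hswap]
      refine Finset.sum_eq_zero fun i _ => ?_
      rw [← sum_inner, hzero i, inner_zero_left]
    rw [e1, e2, e3, sub_zero]
  have hGeq : ∀ i j, j ∈ G i → X i = X j := by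
    intro i j hj
    have h1 : ∀ i ∈ Finset.univ (α := Fin n), (0:ℝ) ≤ ∑ j ∈ G i, ‖X i - X j‖ ^ 2 :=
      fun i _ => Finset.sum_nonneg fun j _ => sq_nonneg _
    have h2 := (Finset.sum_eq_zero_iff_of_nonneg h1).1 hedgesq i (Finset.mem_univ i)
    have h3 := (Finset.sum_eq_zero_iff_of_nonneg fun j _ => sq_nonneg _).1 h2 j hj
    have h4 : ‖X i - X j‖ = 0 := by
      have := sq_eq_zero_iff.1 h3
      exact this
    exact sub_eq_zero.1 (norm_eq_zero.1 h4)
  have hGiff : ∀ i j, j ∈ G i ↔ X j = X i := by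
    intro i j
    constructor
    · exact fun hj => (hGeq i j hj).symm
    · intro hXij
      by_contra hj
      have h1 := hGnonedge i j hj
      rw [hXij, sub_self, norm_zero] at h1
      linarith
  -- the freezing time
  refine ⟨ψ 0 + 1, ?_⟩
  have hclass : ∀ i j, X i = X j → x (ψ 0 + 1) i = x (ψ 0 + 1) j := by
    intro i j hij
    have hGij : G i = G j := by
      ext p
      rw [hGiff i p, hGiff j p, hij]
    rw [hx (ψ 0)]
    show ((nbhd R (x (ψ 0)) i).card : ℝ)⁻¹ • ∑ p ∈ nbhd R (x (ψ 0)) i, x (ψ 0) p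
        = ((nbhd R (x (ψ 0)) j).card : ℝ)⁻¹ • ∑ p ∈ nbhd R (x (ψ 0)) j, x (ψ 0) p
    rw [hGψ 0 i, hGψ 0 j, hGij]
  have hEK : energy R (x (ψ 0 + 1)) ≤ energy R X := by
    unfold energy
    refine Finset.sum_le_sum fun i _ => Finset.sum_le_sum fun j _ => ?_
    by_cases hij : X i = X j
    · rw [hclass i j hij, hij]
      simp
    · have hnot : j ∉ G i := fun h => hij (hGeq i j h)
      have h1 : R ≤ ‖X i - X j‖ := hGnonedge i j hnot
      have h2 : min (‖X i - X j‖ ^ 2) (R ^ 2) = R ^ 2 :=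
        min_eq_right (by nlinarith [norm_nonneg (X i - X j)])
      rw [h2]
      exact min_le_right _ _
  have hEX : energy R X = Einf := by
    have h1 : Tendsto (fun t => energy R (x (ψ t))) atTop (𝓝 (energy R X)) := by
      unfold energy
      refine tendsto_finset_sum _ fun i _ => tendsto_finset_sum _ fun j _ => ?_
      exact (((hXi i).sub (hXi j)).norm.pow 2).min tendsto_const_nhds
    have h2 : Tendsto (fun t => energy R (x (ψ t))) atTop (𝓝 Einf) :=
      hEtend.comp hψmono.tendsto_atTop
    exact tendsto_nhds_unique h1 h2
  have hEconst : ∀ k, ψ 0 + 1 ≤ k → energy R (x k) = Einf := by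
    intro k hk
    have h1 : energy R (x k) ≤ energy R (x (ψ 0 + 1)) := hanti hk
    have h2 := hEinf_le k
    rw [hEX] at hEK
    linarith
  have hfrozen : ∀ k, ψ 0 + 1 ≤ k → x (k+1) = x k := by
    intro k hk
    have h1 := hstep k
    have h2 := hEconst k hk
    have h3 := hEconst (k+1) (hk.trans (Nat.le_succ k))
    have h4 : ∑ i, ‖x (k+1) i - x k i‖ ^ 2 ≤ 0 := by linarith
    funext i
    have h5 : ‖x (k+1) i - x k i‖ ^ 2 ≤ 0 :=
      le_trans (Finset.single_le_sum (f := fun i' => ‖x (k+1) i' - x k i'‖ ^ 2)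
        (fun i' _ => sq_nonneg _) (Finset.mem_univ i)) h4
    have h6 : ‖x (k+1) i - x k i‖ = 0 := by nlinarith [norm_nonneg (x (k+1) i - x k i)]
    exact sub_eq_zero.1 (norm_eq_zero.1 h6)
  have hconst : ∀ k, ψ 0 + 1 ≤ k → x k = x (ψ 0 + 1) := by
    intro k hk
    induction k, hk using Nat.le_induction with
    | base => rfl
    | succ k hk ih => rw [hfrozen k hk]; exact ih
  intro k hk i
  rw [hconst k hk]
end

section
/- Let x_1,…,x_n ∈ ℝ^m and R > 0 be such that the configuration is a fixed point of the Hegselmann–Krause update: x_i = (1/|N_i|) Σ_{j ∈ N_i} x_j for every i, where N_i = { j : ‖x_i − x_j‖ ≤ R }. Then any two connected agents have identical opinions: for all i, j, if ‖x_i − x_j‖ ≤ R then x_i = x_j. Consequently, at a steady state of the distance-based ODRS dynamics the agents split into clusters, with exact consensus inside each cluster and pairwise distance greater than R between distinct cluster opinions. -/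
/-- **At a Hegselmann–Krause fixed point, connected agents agree.**
If `x : Fin n → ℝ^m` is a fixed point of the Hegselmann–Krause update with confidence
radius `R > 0`, i.e. `x i = (1/|N_i|) ∑_{j ∈ N_i} x j` where `N_i = { j : ‖x i - x j‖ ≤ R }`,
then any two agents within distance `R` have identical opinions: `‖x i - x j‖ ≤ R → x i = x j`.
Hence at steady state the agents split into clusters with exact internal consensus and
pairwise distance greater than `R` between distinct cluster opinions. -/
theorem hegselmann_krause_fixed_point_clusters
    {n m : ℕ}
    (R : ℝ) (hR : 0 < R)
    (x : Fin n → EuclideanSpace ℝ (Fin m))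
    (hfix : ∀ i,
      x i =
        (((Finset.univ.filter fun j => ‖x i - x j‖ ≤ R).card : ℝ))⁻¹ •
          ∑ j ∈ Finset.univ.filter fun j => ‖x i - x j‖ ≤ R, x j) :
    ∀ i j, ‖x i - x j‖ ≤ R → x i = x j := by
  set N : Fin n → Finset (Fin n) := fun i => Finset.univ.filter fun j => ‖x i - x j‖ ≤ R with hN
  have hmem : ∀ i j, j ∈ N i ↔ ‖x i - x j‖ ≤ R := by
    intro i j; simp [hN]
  have hself : ∀ i, i ∈ N i := by
    intro i; rw [hmem]; simp [hR.le]
  have hcard : ∀ i, ((N i).card : ℝ) ≠ 0 := by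
    intro i
    have : 0 < (N i).card := Finset.card_pos.mpr ⟨i, hself i⟩
    exact_mod_cast this.ne'
  -- key: sum of displacements to neighbors vanishes
  have hsum : ∀ i, ∑ j ∈ N i, (x i - x j) = 0 := by
    intro i
    have h := hfix i
    have h2 : ((N i).card : ℝ) • x i = ∑ j ∈ N i, x j := by
      rw [h]; rw [smul_smul, mul_inv_cancel₀ (hcard i), one_smul]
    have : ∑ j ∈ N i, (x i - x j) = ((N i).card : ℝ) • x i - ∑ j ∈ N i, x j := by
      rw [Finset.sum_sub_distrib, Finset.sum_const, (Nat.cast_smul_eq_nsmul ℝ _ _).symm]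
    rw [this, h2, sub_self]
  have h1 : ∀ i, ∑ j ∈ N i, (inner ℝ (x i) (x i - x j) : ℝ) = 0 := by
    intro i
    rw [← inner_sum, hsum i, inner_zero_right]
  -- symmetrized term
  have h2 : ∑ i, ∑ j ∈ N i, (inner ℝ (x j) (x i - x j) : ℝ) = 0 := by
    have hsymm : ∀ i j : Fin n, (‖x i - x j‖ ≤ R) ↔ (‖x j - x i‖ ≤ R) := by
      intro i j; rw [norm_sub_rev]
    calc ∑ i, ∑ j ∈ N i, (inner ℝ (x j) (x i - x j) : ℝ)
        = ∑ i, ∑ j, if ‖x i - x j‖ ≤ R then (inner ℝ (x j) (x i - x j) : ℝ) else 0 := by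
          simp [hN, Finset.sum_filter]
      _ = ∑ j, ∑ i, if ‖x i - x j‖ ≤ R then (inner ℝ (x j) (x i - x j) : ℝ) else 0 :=
          Finset.sum_comm
      _ = ∑ j, ∑ i, if ‖x j - x i‖ ≤ R then (inner ℝ (x j) (x i - x j) : ℝ) else 0 := by
          simp_rw [hsymm]
      _ = ∑ j, ∑ i ∈ N j, (inner ℝ (x j) (x i - x j) : ℝ) := by
          simp [hN, Finset.sum_filter]
      _ = ∑ j, -∑ i ∈ N j, (inner ℝ (x j) (x j - x i) : ℝ) := by
          congr 1; funext j
          rw [← Finset.sum_neg_distrib]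
          congr 1; funext i
          rw [← inner_neg_right, neg_sub]
      _ = 0 := Finset.sum_eq_zero fun j _ => by rw [h1 j, neg_zero]
  have hT : ∑ i, ∑ j ∈ N i, (inner ℝ (x i - x j) (x i - x j) : ℝ) = 0 := by
    have : ∀ i, ∀ j ∈ N i, (inner ℝ (x i - x j) (x i - x j) : ℝ)
        = (inner ℝ (x i) (x i - x j) : ℝ) - (inner ℝ (x j) (x i - x j) : ℝ) := by
      intro i j _; rw [← inner_sub_left]
    calc ∑ i, ∑ j ∈ N i, (inner ℝ (x i - x j) (x i - x j) : ℝ)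
        = ∑ i, ∑ j ∈ N i, ((inner ℝ (x i) (x i - x j) : ℝ) - (inner ℝ (x j) (x i - x j) : ℝ)) := by
          exact Finset.sum_congr rfl fun i _ => Finset.sum_congr rfl (this i)
      _ = (∑ i, ∑ j ∈ N i, (inner ℝ (x i) (x i - x j) : ℝ))
            - ∑ i, ∑ j ∈ N i, (inner ℝ (x j) (x i - x j) : ℝ) := by
          rw [← Finset.sum_sub_distrib]
          exact Finset.sum_congr rfl fun i _ => Finset.sum_sub_distrib _ _
      _ = 0 := by rw [Finset.sum_eq_zero fun i _ => h1 i, h2, sub_zero]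
  -- each summand is nonneg, hence zero
  intro i j hij
  have hnn : ∀ i ∈ (Finset.univ : Finset (Fin n)),
      0 ≤ ∑ j ∈ N i, (inner ℝ (x i - x j) (x i - x j) : ℝ) :=
    fun i _ => Finset.sum_nonneg fun j _ => real_inner_self_nonneg
  have houter := (Finset.sum_eq_zero_iff_of_nonneg hnn).mp hT i (Finset.mem_univ i)
  have hinner := (Finset.sum_eq_zero_iff_of_nonneg
      (fun j _ => real_inner_self_nonneg)).mp houter j ((hmem i j).mpr hij)
  have : x i - x j = 0 := inner_self_eq_zero.mp hinner
  exact sub_eq_zero.mp this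
end
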